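/- Let G be a finite simple graph of order n and girth at least 5, and let α ≥ 0 be a real number such that G has a vertex-disjoint path cover consisting of at most α·n paths. Then the location-domination number of G satisfies γLD(G) ≤ ((2 + 4α)/5)·n. -/

import Mathlib

namespace VdpAux

/-- 0-based picked indices for a path with `m` vertices. -/
def pickIdx (m : ℕ) : Finset ℕ :=
  (Finset.range m).filter
    (fun j => (j % 5 = 1 ∨ j % 5 = 3) ∨ (j + 1 = m ∧ (m % 5 = 1 ∨ m % 5 = 3)))

lemma mem_pickIdx {m j : ℕ} :
    j ∈ pickIdx m ↔ j < m ∧ ((j % 5 = 1 ∨ j % 5 = 3) ∨ (j + 1 = m ∧ (m % 5 = 1 ∨ m % 5 = 3))) := by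
  simp [pickIdx, and_comm]

lemma pattern_card (m : ℕ) :
    5 * ((Finset.range m).filter (fun j => j % 5 = 1 ∨ j % 5 = 3)).card
      + (if m % 5 = 1 then 2 else if m % 5 = 3 then 1 else 0)
      = 2 * m + (if m % 5 = 2 then 1 else if m % 5 = 4 then 2 else 0) := by
  induction m with
  | zero => simp
  | succ m ih =>
    rw [Finset.range_add_one, Finset.filter_insert]
    by_cases h : m % 5 = 1 ∨ m % 5 = 3
    · rw [if_pos h, Finset.card_insert_of_notMem (by simp)]
      split_ifs at ih ⊢ <;> omega
    · rw [if_neg h]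
      split_ifs at ih ⊢ <;> omega

lemma card_pickIdx (m : ℕ) : 5 * (pickIdx m).card ≤ 2 * m + 4 := by
  have h3 := pattern_card m
  by_cases h : m % 5 = 1 ∨ m % 5 = 3
  · have hsub : pickIdx m ⊆
        ((Finset.range m).filter (fun j => j % 5 = 1 ∨ j % 5 = 3)) ∪ {m - 1} := by
      intro j hj
      rw [mem_pickIdx] at hj
      simp only [Finset.mem_union, Finset.mem_filter, Finset.mem_range, Finset.mem_singleton]
      omega
    have h1 := Finset.card_le_card hsub
    have h2 := Finset.card_union_le
      ((Finset.range m).filter (fun j => j % 5 = 1 ∨ j % 5 = 3)) ({m - 1} : Finset ℕ)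
    simp only [Finset.card_singleton] at h2
    split_ifs at h3 <;> omega
  · have hsub : pickIdx m ⊆ (Finset.range m).filter (fun j => j % 5 = 1 ∨ j % 5 = 3) := by
      intro j hj
      rw [mem_pickIdx] at hj
      simp only [Finset.mem_filter, Finset.mem_range]
      omega
    have h1 := Finset.card_le_card hsub
    split_ifs at h3 <;> omega

lemma dom_arith {m k : ℕ} (hk : k < m) (hnp : k ∉ pickIdx m) :
    (k + 1 < m ∧ (k + 1) ∈ pickIdx m) ∨ (1 ≤ k ∧ k - 1 ∈ pickIdx m) := by
  simp only [mem_pickIdx] at *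
  omega

def SafeIdx (m k : ℕ) : Prop :=
  k ∈ pickIdx m ∨ (1 ≤ k ∧ k + 1 < m ∧ (k - 1) ∈ pickIdx m ∧ (k + 1) ∈ pickIdx m)

set_option maxHeartbeats 1000000 in
lemma safe_arith {m j : ℕ} (hj : j ∈ pickIdx m) (h1 : 1 ≤ j) (h2 : j + 1 < m) :
    SafeIdx m (j - 1) ∨ SafeIdx m (j + 1) := by
  simp only [SafeIdx, mem_pickIdx] at *
  omega

lemma no_c4 {V : Type*} {G : SimpleGraph V} (hg : 5 ≤ G.egirth) {u v c d : V}
    (huv : u ≠ v) (hcd : c ≠ d) (h1 : G.Adj u c) (h2 : G.Adj u d)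
    (h3 : G.Adj v c) (h4 : G.Adj v d) : False := by
  have huc := h1.ne
  have hud := h2.ne
  have hvc := h3.ne
  have hvd := h4.ne
  let w : G.Walk u u :=
    .cons h1 (.cons h3.symm (.cons h4 (.cons h2.symm .nil)))
  have hlen : w.length = 4 := rfl
  have hc : w.IsCycle := by
    rw [SimpleGraph.Walk.isCycle_def]
    refine ⟨⟨?_⟩, by simp [w], ?_⟩
    · simp only [w, SimpleGraph.Walk.edges_cons, SimpleGraph.Walk.edges_nil,
        List.nodup_cons, List.mem_cons, List.not_mem_nil, or_false, List.nodup_nil, and_true,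
        Sym2.eq, Sym2.rel_iff', Prod.mk.injEq, Prod.swap_prod_mk]
      refine ⟨?_, ?_, ?_⟩ <;> push_neg <;> aesop
    · simp only [w, SimpleGraph.Walk.support_cons, SimpleGraph.Walk.support_nil,
        List.tail_cons, List.nodup_cons, List.mem_cons, List.not_mem_nil, or_false,
        List.nodup_nil, and_true, List.mem_singleton]
      push_neg
      aesop
  have h5 := SimpleGraph.le_egirth.mp hg u w hc
  rw [hlen] at h5
  norm_num at h5

/-- Card of a finite union is at most the sum of the cards. -/
lemma ncard_iUnion_le' {ι α : Type*} [Fintype ι] [Finite α] (f : ι → Set α) :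
    (⋃ i, f i).ncard ≤ ∑ i, (f i).ncard := by
  classical
  have key : ∀ t : Finset ι, (⋃ i ∈ t, f i).ncard ≤ ∑ i ∈ t, (f i).ncard := by
    intro t
    induction t using Finset.induction with
    | empty => simp
    | insert a s hnotmem ih =>
      rw [Finset.set_biUnion_insert, Finset.sum_insert hnotmem]
      exact le_trans (Set.ncard_union_le _ _) (by omega)
  have h := key Finset.univ
  simpa using h

/-- Sum of cards of pairwise disjoint sets is at most the size of the universe. -/
lemma sum_ncard_le_card {ι α : Type*} [Fintype ι] [Fintype α] (f : ι → Set α)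
    (hdisj : ∀ i j, i ≠ j → Disjoint (f i) (f j)) :
    ∑ i, (f i).ncard ≤ Fintype.card α := by
  classical
  have key : ∀ t : Finset ι, ∑ i ∈ t, (f i).ncard = (⋃ i ∈ t, f i).ncard := by
    intro t
    induction t using Finset.induction with
    | empty => simp
    | insert a s hnotmem ih =>
      rw [Finset.sum_insert hnotmem, Finset.set_biUnion_insert, ih,
        Set.ncard_union_eq ?_ (Set.toFinite _) (Set.toFinite _)]
      simp only [Set.disjoint_iUnion_right]
      intro i hi
      exact hdisj a i (fun h => hnotmem (h ▸ hi))
  rw [key Finset.univ]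
  calc (⋃ i ∈ Finset.univ, f i).ncard ≤ (Set.univ : Set α).ncard :=
        Set.ncard_le_ncard (Set.subset_univ _) (Set.toFinite _)
    _ = Fintype.card α := by rw [Set.ncard_univ, Nat.card_eq_fintype_card]

end VdpAux

open VdpAux

/-- A set of vertices is *dominating* if every vertex is equal or adjacent to a
member of the set. -/
def SimpleGraph.DominatingSet {V : Type*} (G : SimpleGraph V) (D : Set V) : Prop :=
  ∀ v : V, ∃ d ∈ D, d = v ∨ G.Adj d v

/-- A set `C` is *locating-dominating* if it is dominating and every two distinct
vertices outside `C` have different neighbourhoods within `C`. -/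
def SimpleGraph.LocatingDominatingSet {V : Type*} (G : SimpleGraph V) (C : Set V) : Prop :=
  G.DominatingSet C ∧
    ∀ u ∉ C, ∀ v ∉ C, u ≠ v → G.neighborSet u ∩ C ≠ G.neighborSet v ∩ C

/-- The location-domination number: the minimum size of a locating-dominating set. -/
noncomputable def SimpleGraph.gammaLD {V : Type*} (G : SimpleGraph V) : ℕ :=
  sInf {k : ℕ | ∃ C : Set V, G.LocatingDominatingSet C ∧ C.ncard = k}

/-- A *vertex-disjoint path cover* of `G`: a partition of the vertex set into
sets, each of which induces a subgraph of `G` having a Hamiltonian path. -/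
def SimpleGraph.IsVdpCover {V : Type*} (G : SimpleGraph V) (Ps : Set (Set V)) : Prop :=
  (∀ v : V, ∃! S, S ∈ Ps ∧ v ∈ S) ∧
    ∀ S ∈ Ps, ∃ (a b : S) (p : (G.induce S).Walk a b),
      p.IsPath ∧ ∀ w : S, w ∈ p.support

/-- Theorem: if a graph of order `n` and girth at least 5 has a vdp-cover with at
most `α·n` paths, then its location-domination number is at most `((2+4α)/5)·n`. -/
theorem gammaLD_le_of_vdpCover
    {V : Type*} [Fintype V] (G : SimpleGraph V) (hg : 5 ≤ G.egirth)
    (α : ℝ) (hα : 0 ≤ α)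
    (Ps : Set (Set V)) (hcover : G.IsVdpCover Ps)
    (hsize : (Ps.ncard : ℝ) ≤ α * Fintype.card V) :
    (G.gammaLD : ℝ) ≤ (2 + 4 * α) / 5 * Fintype.card V := by
  classical
  obtain ⟨huniq, hpath⟩ := hcover
  -- extract a Hamiltonian-path list for each cell of the cover
  have hex : ∀ S : Ps, ∃ Lx : List V,
      Lx.Nodup ∧ List.Chain' G.Adj Lx ∧ ∀ v : V, v ∈ Lx ↔ v ∈ (S : Set V) := by
    rintro ⟨S, hS⟩
    obtain ⟨a, b, p, hp, hall⟩ := hpath S hS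
    refine ⟨p.support.map Subtype.val, ?_, ?_, ?_⟩
    · exact hp.support_nodup.map Subtype.val_injective
    · exact List.isChain_map_of_isChain Subtype.val (fun a b h => h) p.isChain_adj_support
    · intro v
      simp only [List.mem_map]
      constructor
      · rintro ⟨w, _, rfl⟩; exact w.2
      · intro hv; exact ⟨⟨v, hv⟩, hall _, rfl⟩
  choose L hnd hch hmem using hex
  -- the candidate locating-dominating set
  let P : Ps → Set V := fun S =>
    {v | ∃ j : Fin (L S).length, j.val ∈ pickIdx (L S).length ∧ (L S).get j = v}
  let C : Set V := ⋃ S, P S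
  have hPC : ∀ S : Ps, P S ⊆ C := fun S => Set.subset_iUnion P S
  have hgetS : ∀ (S : Ps) (j : Fin (L S).length), (L S).get j ∈ (S : Set V) :=
    fun S j => (hmem S _).mp (List.get_mem _ _)
  -- uniqueness of cells
  have hcell : ∀ (v : V) (S T : Ps), v ∈ (S : Set V) → v ∈ (T : Set V) → S = T := by
    rintro v ⟨S, hS⟩ ⟨T, hT⟩ h1 h2
    obtain ⟨U, _, hU⟩ := huniq v
    exact Subtype.ext ((hU S ⟨hS, h1⟩).trans (hU T ⟨hT, h2⟩).symm)
  -- adjacency along a list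
  have hadj : ∀ (S : Ps) (j k : Fin (L S).length),
      (j.val + 1 = k.val ∨ k.val + 1 = j.val) → G.Adj ((L S).get j) ((L S).get k) := by
    intro S j k hjk
    have hchain := List.isChain_iff_getElem.mp (hch S)
    rcases hjk with h | h
    · have h2 := hchain j.val (by omega)
      have hk : k = ⟨j.val + 1, by omega⟩ := Fin.ext h.symm
      rw [hk]
      exact h2
    · have h2 := hchain k.val (by omega)
      have hj : j = ⟨k.val + 1, by omega⟩ := Fin.ext h.symm
      rw [hj]
      exact h2.symm
  -- each vertex sits somewhere
  have hidx : ∀ v : V, ∃ (S : Ps) (j : Fin (L S).length), (L S).get j = v := by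
    intro v
    obtain ⟨S, ⟨hS, hv⟩, -⟩ := huniq v
    obtain ⟨j, hj⟩ := List.mem_iff_get.mp ((hmem ⟨S, hS⟩ v).mpr hv)
    exact ⟨⟨S, hS⟩, j, hj⟩
  -- dominator of an uncovered vertex
  have hdomi : ∀ (S : Ps) (k : Fin (L S).length), (L S).get k ∉ C →
      ∃ j : Fin (L S).length, j.val ∈ pickIdx (L S).length ∧
        (j.val = k.val + 1 ∨ k.val = j.val + 1) := by
    intro S k hk
    have hknp : k.val ∉ pickIdx (L S).length := fun hcon => hk (hPC S ⟨k, hcon, rfl⟩)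
    rcases dom_arith k.isLt hknp with ⟨h1, h2⟩ | ⟨h1, h2⟩
    · exact ⟨⟨k.val + 1, h1⟩, h2, Or.inl rfl⟩
    · exact ⟨⟨k.val - 1, by omega⟩, h2, Or.inr (by show k.val = k.val - 1 + 1; omega)⟩
  -- C is dominating
  have hC_dom : G.DominatingSet C := by
    intro v
    by_cases hv : v ∈ C
    · exact ⟨v, hv, Or.inl rfl⟩
    · obtain ⟨S, k, hk⟩ := hidx v
      obtain ⟨j, hjp, hjk⟩ := hdomi S k (hk ▸ hv)
      refine ⟨(L S).get j, hPC S ⟨j, hjp, rfl⟩, Or.inr ?_⟩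
      rw [← hk]
      exact hadj S j k (by omega)
  -- C is locating
  have hC_loc : ∀ u ∉ C, ∀ v ∉ C, u ≠ v →
      G.neighborSet u ∩ C ≠ G.neighborSet v ∩ C := by
    intro u hu v hv huv hEq
    by_cases hsing : ∀ x ∈ G.neighborSet u ∩ C, ∀ y ∈ G.neighborSet u ∩ C, x = y
    · -- the common code is a singleton {c}; c dominates both u and v along its own path
      obtain ⟨Su, ku, hku⟩ := hidx u
      obtain ⟨Sv, kv, hkv⟩ := hidx v
      obtain ⟨ju, hjup, hjuk⟩ := hdomi Su ku (hku ▸ hu)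
      obtain ⟨jv, hjvp, hjvk⟩ := hdomi Sv kv (hkv ▸ hv)
      have hduC : (L Su).get ju ∈ C := hPC Su ⟨ju, hjup, rfl⟩
      have hdvC : (L Sv).get jv ∈ C := hPC Sv ⟨jv, hjvp, rfl⟩
      have hdu_mem : (L Su).get ju ∈ G.neighborSet u ∩ C := by
        refine ⟨?_, hduC⟩
        rw [SimpleGraph.mem_neighborSet, ← hku]
        exact hadj Su ku ju (by omega)
      have hdv_mem : (L Sv).get jv ∈ G.neighborSet u ∩ C := by
        rw [hEq]
        refine ⟨?_, hdvC⟩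
        rw [SimpleGraph.mem_neighborSet, ← hkv]
        exact hadj Sv kv jv (by omega)
      have hdudv : (L Su).get ju = (L Sv).get jv := hsing _ hdu_mem _ hdv_mem
      have hSuv : Su = Sv :=
        hcell _ Su Sv (hgetS Su ju) (hdudv ▸ hgetS Sv jv)
      subst hSuv
      have hjujv : ju = jv := (List.nodup_iff_injective_get.mp (hnd Su)) hdudv
      subst hjujv
      have hkukv : ku.val ≠ kv.val := by
        intro h
        exact huv (by rw [← hku, ← hkv, Fin.ext h])
      -- an uncovered vertex with singleton code sits at an unsafe index
      have hunsafe : ∀ k : Fin (L Su).length, (L Su).get k ∉ C →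
          (∀ x ∈ G.neighborSet ((L Su).get k) ∩ C,
            ∀ y ∈ G.neighborSet ((L Su).get k) ∩ C, x = y) →
          ¬ SafeIdx (L Su).length k.val := by
        intro k hkC hks hsafe
        rcases hsafe with hpick | ⟨h1, h2, h3, h4⟩
        · exact hkC (hPC Su ⟨k, hpick, rfl⟩)
        · have ha : (⟨k.val - 1, by omega⟩ : Fin (L Su).length).val = k.val - 1 := rfl
          set a : Fin (L Su).length := ⟨k.val - 1, by omega⟩ with hadef
          set b : Fin (L Su).length := ⟨k.val + 1, h2⟩ with hbdef
          have haC : (L Su).get a ∈ C := hPC Su ⟨a, h3, rfl⟩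
          have hbC : (L Su).get b ∈ C := hPC Su ⟨b, h4, rfl⟩
          have haA : G.Adj ((L Su).get k) ((L Su).get a) :=
            hadj Su k a (Or.inr (by show k.val - 1 + 1 = k.val; omega))
          have hbA : G.Adj ((L Su).get k) ((L Su).get b) := hadj Su k b (Or.inl rfl)
          have hab : (L Su).get a = (L Su).get b := hks _ ⟨haA, haC⟩ _ ⟨hbA, hbC⟩
          have hab' : a = b := (List.nodup_iff_injective_get.mp (hnd Su)) hab
          have : k.val - 1 = k.val + 1 := congrArg Fin.val hab'
          omega
      -- both ku and kv are adjacent to the picked index ju, hence one of them is safe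
      have hvs : ∀ x ∈ G.neighborSet v ∩ C, ∀ y ∈ G.neighborSet v ∩ C, x = y := by
        rw [← hEq]
        exact hsing
      have hUu : ¬ SafeIdx (L Su).length ku.val :=
        hunsafe ku (by rw [hku]; exact hu) (by rw [hku]; exact hsing)
      have hUv : ¬ SafeIdx (L Su).length kv.val :=
        hunsafe kv (by rw [hkv]; exact hv) (by rw [hkv]; exact hvs)
      have hcase : (ku.val + 1 = ju.val ∧ ju.val + 1 = kv.val) ∨
          (kv.val + 1 = ju.val ∧ ju.val + 1 = ku.val) := by omega
      have hkulst := ku.isLt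
      have hkvlst := kv.isLt
      rcases hcase with ⟨hc1, hc2⟩ | ⟨hc1, hc2⟩
      · have := safe_arith hjup (by omega) (by omega)
        rcases this with hS1 | hS2
        · exact hUu (by rwa [show ju.val - 1 = ku.val by omega] at hS1)
        · exact hUv (by rwa [show ju.val + 1 = kv.val by omega] at hS2)
      · have := safe_arith hjup (by omega) (by omega)
        rcases this with hS1 | hS2
        · exact hUv (by rwa [show ju.val - 1 = kv.val by omega] at hS1)
        · exact hUu (by rwa [show ju.val + 1 = ku.val by omega] at hS2)
    · push_neg at hsing
      obtain ⟨x, hx, y, hy, hxy⟩ := hsing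
      have hx' : x ∈ G.neighborSet v ∩ C := hEq ▸ hx
      have hy' : y ∈ G.neighborSet v ∩ C := hEq ▸ hy
      exact no_c4 hg huv hxy hx.1 hy.1 hx'.1 hy'.1
  -- cardinality bound
  haveI : Fintype Ps := Fintype.ofFinite _
  have hcardP : ∀ S : Ps, 5 * (P S).ncard ≤ 2 * (L S).length + 4 := by
    intro S
    have himg : P S = (fun j : Fin (L S).length => (L S).get j) ''
        {j : Fin (L S).length | j.val ∈ pickIdx (L S).length} := by
      ext v
      simp only [P, Set.mem_image, Set.mem_setOf_eq]
    have h1 : (P S).ncard ≤ ({j : Fin (L S).length | j.val ∈ pickIdx (L S).length}).ncard := by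
      rw [himg]
      exact Set.ncard_image_le (Set.toFinite _)
    have h2 : ({j : Fin (L S).length | j.val ∈ pickIdx (L S).length}).ncard
        ≤ (pickIdx (L S).length).card := by
      rw [← Set.ncard_coe_finset, ← Set.ncard_image_of_injective _ Fin.val_injective]
      apply Set.ncard_le_ncard _ (Set.toFinite _)
      rintro x ⟨j, hj, rfl⟩
      exact hj
    have h3 := card_pickIdx (L S).length
    omega
  have hlen_eq : ∀ S : Ps, (L S).length = (S : Set V).ncard := by
    intro S
    have hSeq : (S : Set V) = ((L S).toFinset : Set V) := by
      ext v
      simp only [Finset.coe_sort_coe, List.coe_toFinset, Set.mem_setOf_eq]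
      exact (hmem S v).symm
    rw [hSeq, Set.ncard_coe_finset, List.toFinset_card_of_nodup (hnd S)]
  have hsum_le : ∑ S : Ps, (S : Set V).ncard ≤ Fintype.card V := by
    apply sum_ncard_le_card
    intro S T hST
    rw [Set.disjoint_left]
    intro v hvS hvT
    exact hST (hcell v S T hvS hvT)
  have hps : Ps.ncard = Fintype.card Ps := by
    rw [← Nat.card_coe_set_eq, Nat.card_eq_fintype_card]
  have hCcard : 5 * C.ncard ≤ 2 * Fintype.card V + 4 * Ps.ncard := by
    have h0 : C.ncard ≤ ∑ S : Ps, (P S).ncard := ncard_iUnion_le' P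
    have h1 : ∑ S : Ps, 5 * (P S).ncard ≤ ∑ S : Ps, (2 * (L S).length + 4) :=
      Finset.sum_le_sum (fun S _ => hcardP S)
    have h2 : ∑ S : Ps, (2 * (L S).length + 4)
        = 2 * (∑ S : Ps, (L S).length) + 4 * Fintype.card Ps := by
      rw [Finset.sum_add_distrib, ← Finset.mul_sum, Finset.sum_const, Finset.card_univ,
        smul_eq_mul]
      ring
    have h3 : ∑ S : Ps, (L S).length = ∑ S : Ps, (S : Set V).ncard :=
      Finset.sum_congr rfl (fun S _ => hlen_eq S)
    have h4 : ∑ S : Ps, 5 * (P S).ncard = 5 * ∑ S : Ps, (P S).ncard := by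
      rw [Finset.mul_sum]
    omega
  -- conclude
  have hγ : G.gammaLD ≤ C.ncard :=
    Nat.sInf_le ⟨C, ⟨hC_dom, hC_loc⟩, rfl⟩
  have hγ' : (G.gammaLD : ℝ) ≤ (C.ncard : ℝ) := Nat.cast_le.mpr hγ
  have h5 : (5 : ℝ) * C.ncard ≤ 2 * Fintype.card V + 4 * Ps.ncard := by
    exact_mod_cast hCcard
  have hn : (0 : ℝ) ≤ (Fintype.card V : ℝ) := Nat.cast_nonneg _
  linarith
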